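/- arXiv:2604.05421 — 2 statements merged into one kernel-verified Lean document; each statement's English description precedes it below -/
import Mathlib

section
/- Let N ≥ 1, fix x ∈ ℝ^N \ {0}, ε > 0, and n ∈ {1,…,N}. Then ∫_{{ξ ∈ S^{N−1} : |⟨ξ,x⟩| > ε}} ξ_n / ⟨ξ,x⟩ dξ = (x_n / |x|²) · vol({ξ ∈ S^{N−1} : |⟨ξ,x⟩| > ε}), where dξ is the rotation-invariant surface measure on the unit sphere S^{N−1}. -/
open MeasureTheory Metric Set
open scoped RealInnerProductSpace Pointwise

/-- The map on the unit sphere induced by a linear isometry equivalence is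
measure-preserving for the `toSphere` measure. -/
lemma sphereMap_measurePreserving {N : ℕ}
    (R : EuclideanSpace ℝ (Fin N) ≃ₗᵢ[ℝ] EuclideanSpace ℝ (Fin N)) :
    MeasurePreserving
      (fun ξ : sphere (0 : EuclideanSpace ℝ (Fin N)) 1 =>
        (⟨R ξ, by
          have := mem_sphere_zero_iff_norm.1 ξ.2
          simpa [mem_sphere_zero_iff_norm, R.norm_map] using this⟩ :
          sphere (0 : EuclideanSpace ℝ (Fin N)) 1))
      (volume : Measure (EuclideanSpace ℝ (Fin N))).toSphere
      (volume : Measure (EuclideanSpace ℝ (Fin N))).toSphere := by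
  set f : sphere (0 : (EuclideanSpace ℝ (Fin N))) 1 → sphere (0 : (EuclideanSpace ℝ (Fin N))) 1 := fun ξ =>
    ⟨R ξ, by
      have := mem_sphere_zero_iff_norm.1 ξ.2
      simpa [mem_sphere_zero_iff_norm, R.norm_map] using this⟩ with hf
  have hfc : Continuous f :=
    Continuous.subtype_mk (R.continuous.comp continuous_subtype_val) _
  refine ⟨hfc.measurable, ?_⟩
  ext s hs
  rw [Measure.map_apply hfc.measurable hs,
    Measure.toSphere_apply' _ (hfc.measurable hs), Measure.toSphere_apply' _ hs]
  have hset : Ioo (0 : ℝ) 1 • ((↑) '' (f ⁻¹' s)) = R ⁻¹' (Ioo (0 : ℝ) 1 • ((↑) '' s)) := by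
    ext v
    constructor
    · rintro ⟨c, hc, -, ⟨ξ, hξ, rfl⟩, rfl⟩
      refine ⟨c, hc, (f ξ : (EuclideanSpace ℝ (Fin N))), ⟨f ξ, hξ, rfl⟩, ?_⟩
      simp [f, LinearIsometryEquiv.map_smul]
    · rintro ⟨c, hc, -, ⟨ζ, hζ, rfl⟩, hv⟩
      have hnorm : R.symm (ζ : (EuclideanSpace ℝ (Fin N))) ∈ sphere (0 : (EuclideanSpace ℝ (Fin N))) 1 := by
        have := mem_sphere_zero_iff_norm.1 ζ.2
        simpa [mem_sphere_zero_iff_norm, R.symm.norm_map] using this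
      refine ⟨c, hc, (⟨R.symm (ζ : (EuclideanSpace ℝ (Fin N))), hnorm⟩ : sphere (0 : (EuclideanSpace ℝ (Fin N))) 1), ⟨⟨R.symm ζ, hnorm⟩, ?_, rfl⟩, ?_⟩
      · show f _ ∈ s
        have : f ⟨R.symm (ζ : (EuclideanSpace ℝ (Fin N))), hnorm⟩ = ζ := by
          apply Subtype.ext
          simp [f]
        rwa [this]
      · apply R.injective
        simp only [LinearIsometryEquiv.map_smul, LinearIsometryEquiv.apply_symm_apply]
        exact hv
  rw [hset]
  have := R.measurePreserving.measure_preimage_emb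
    (R.toHomeomorph.measurableEmbedding) (Ioo (0 : ℝ) 1 • ((↑) '' s))
  rw [this]

/-- For `x ≠ 0` in `ℝ^N`, `ε > 0`, and a coordinate `n`:
`∫_{{ξ ∈ S^{N−1} : |⟨ξ,x⟩| > ε}} ξ_n / ⟨ξ,x⟩ dξ
  = (x_n/|x|²) vol({ξ ∈ S^{N−1} : |⟨ξ,x⟩| > ε})`,
where `dξ` is the rotation-invariant surface measure on the unit sphere. -/
theorem sphere_reflection_integral (N : ℕ) (hN : 1 ≤ N)
    (x : EuclideanSpace ℝ (Fin N)) (hx : x ≠ 0) (ε : ℝ) (hε : 0 < ε) (n : Fin N) :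
    ∫ ξ in {ξ : sphere (0 : EuclideanSpace ℝ (Fin N)) 1 |
        ε < |⟪(ξ : EuclideanSpace ℝ (Fin N)), x⟫|},
        (ξ : EuclideanSpace ℝ (Fin N)) n / ⟪(ξ : EuclideanSpace ℝ (Fin N)), x⟫
        ∂(volume : Measure (EuclideanSpace ℝ (Fin N))).toSphere =
      x n / ‖x‖ ^ 2 *
        (((volume : Measure (EuclideanSpace ℝ (Fin N))).toSphere
          {ξ : sphere (0 : EuclideanSpace ℝ (Fin N)) 1 |
            ε < |⟪(ξ : EuclideanSpace ℝ (Fin N)), x⟫|}).toReal) := by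
  classical
  have hE : True := trivial
  set μs := (volume : Measure (EuclideanSpace ℝ (Fin N))).toSphere with hμs
  set S : Set (sphere (0 : (EuclideanSpace ℝ (Fin N))) 1) := {ξ | ε < |⟪(ξ : (EuclideanSpace ℝ (Fin N))), x⟫|} with hS
  -- measurability of S
  have hcont : Continuous fun ξ : sphere (0 : (EuclideanSpace ℝ (Fin N))) 1 => |⟪(ξ : (EuclideanSpace ℝ (Fin N))), x⟫| :=
    (continuous_subtype_val.inner continuous_const).abs
  have hSm : MeasurableSet S := measurableSet_lt measurable_const hcont.measurable
  -- the reflection across the line ℝ x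
  set K : Submodule ℝ (EuclideanSpace ℝ (Fin N)) := ℝ ∙ x with hK
  set R : (EuclideanSpace ℝ (Fin N)) ≃ₗᵢ[ℝ] (EuclideanSpace ℝ (Fin N)) := K.reflection with hR
  have hRx : R x = x := Submodule.reflection_mem_subspace_eq_self (Submodule.mem_span_singleton_self x)
  have hinnerx : ∀ v : (EuclideanSpace ℝ (Fin N)), ⟪R v, x⟫ = ⟪v, x⟫ := by
    intro v
    conv_lhs => rw [← hRx]
    exact R.inner_map_map v x
  -- w : component of e_n orthogonal to x
  set c : ℝ := x n / ‖x‖ ^ 2 with hc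
  set w : (EuclideanSpace ℝ (Fin N)) := EuclideanSpace.single n (1 : ℝ) - c • x with hw
  have hwmem : w ∈ Kᗮ := by
    rw [hK, Submodule.mem_orthogonal_singleton_iff_inner_right]
    have hx2 : ‖x‖ ^ 2 ≠ 0 := pow_ne_zero 2 (norm_ne_zero_iff.2 hx)
    rw [hw, inner_sub_right, inner_smul_right, real_inner_self_eq_norm_sq]
    rw [EuclideanSpace.inner_single_right]
    simp only [RCLike.star_def, conj_trivial, one_mul]
    rw [hc, div_mul_cancel₀ _ hx2, sub_self]
  have hRw : R w = -w := Submodule.reflection_mem_subspace_orthogonalComplement_eq_neg hwmem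
  have hinnerw : ∀ v : (EuclideanSpace ℝ (Fin N)), ⟪R v, w⟫ = -⟪v, w⟫ := by
    intro v
    have : w = R (-w) := by rw [map_neg, hRw, neg_neg]
    conv_lhs => rw [this]
    rw [R.inner_map_map, inner_neg_right]
  -- decomposition of the coordinate
  have hdecomp : ∀ ξ : (EuclideanSpace ℝ (Fin N)), ξ n = c * ⟪ξ, x⟫ + ⟪ξ, w⟫ := by
    intro ξ
    rw [hw, inner_sub_right, inner_smul_right, EuclideanSpace.inner_single_right]
    simp only [RCLike.star_def, conj_trivial, one_mul]
    ring
  -- sphere map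
  set f : sphere (0 : (EuclideanSpace ℝ (Fin N))) 1 → sphere (0 : (EuclideanSpace ℝ (Fin N))) 1 := fun ξ =>
    ⟨R ξ, by
      have := mem_sphere_zero_iff_norm.1 ξ.2
      simpa [mem_sphere_zero_iff_norm, R.norm_map] using this⟩ with hf
  have hfmp : MeasurePreserving f μs μs := sphereMap_measurePreserving R
  have hfemb : MeasurableEmbedding f := by
    have hinj : Function.Injective f := by
      intro a b hab
      apply Subtype.ext
      apply R.injective
      exact congrArg Subtype.val hab
    have hfc : Continuous f :=
      Continuous.subtype_mk (R.continuous.comp continuous_subtype_val) _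
    exact (hfc.isClosedEmbedding hinj).measurableEmbedding
  have hfS : f ⁻¹' S = S := by
    ext ξ
    simp only [hS, Set.mem_preimage, Set.mem_setOf_eq, hf]
    rw [hinnerx]
  -- the odd part integrates to zero
  set g : sphere (0 : (EuclideanSpace ℝ (Fin N))) 1 → ℝ := fun ξ => ⟪(ξ : (EuclideanSpace ℝ (Fin N))), w⟫ / ⟪(ξ : (EuclideanSpace ℝ (Fin N))), x⟫ with hg
  have hgodd : ∀ ξ, g (f ξ) = -g ξ := by
    intro ξ
    simp only [hg, hf]
    rw [hinnerx, hinnerw, neg_div]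
  have hgzero : ∫ ξ in S, g ξ ∂μs = 0 := by
    have h1 : ∫ ξ in f ⁻¹' S, g (f ξ) ∂μs = ∫ ξ in S, g ξ ∂μs :=
      hfmp.setIntegral_preimage_emb hfemb g S
    rw [hfS] at h1
    have h2 : ∫ ξ in S, g (f ξ) ∂μs = ∫ ξ in S, -g ξ ∂μs := by
      apply setIntegral_congr_fun hSm
      intro ξ _
      exact hgodd ξ
    rw [h2, integral_neg] at h1
    linarith
  -- integrability
  have hgmeas : Measurable g := by
    apply Measurable.div
    · exact ((continuous_subtype_val.inner continuous_const)).measurable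
    · exact ((continuous_subtype_val.inner continuous_const)).measurable
  have hgint : IntegrableOn g S μs := by
    refine Integrable.mono' (integrable_const (‖w‖ / ε)) hgmeas.aestronglyMeasurable ?_
    filter_upwards [ae_restrict_mem hSm] with ξ hξ
    have hξ' : ε < |⟪(ξ : (EuclideanSpace ℝ (Fin N))), x⟫| := hξ
    have hb1 : |⟪(ξ : (EuclideanSpace ℝ (Fin N))), w⟫| ≤ ‖w‖ := by
      have := abs_real_inner_le_norm (ξ : (EuclideanSpace ℝ (Fin N))) w
      have hn : ‖(ξ : (EuclideanSpace ℝ (Fin N)))‖ = 1 := mem_sphere_zero_iff_norm.1 ξ.2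
      rwa [hn, one_mul] at this
    rw [hg]
    simp only [Real.norm_eq_abs, abs_div]
    apply div_le_div₀ (norm_nonneg w) hb1 hε hξ'.le
  -- main computation
  have hcongr : ∫ ξ in S, (ξ : (EuclideanSpace ℝ (Fin N))) n / ⟪(ξ : (EuclideanSpace ℝ (Fin N))), x⟫ ∂μs
      = ∫ ξ in S, (c + g ξ) ∂μs := by
    apply setIntegral_congr_fun hSm
    intro ξ hξ
    have hξ' : ε < |⟪(ξ : (EuclideanSpace ℝ (Fin N))), x⟫| := hξ
    have hne : ⟪(ξ : (EuclideanSpace ℝ (Fin N))), x⟫ ≠ 0 := by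
      intro h
      rw [h, abs_zero] at hξ'
      linarith
    show (ξ : (EuclideanSpace ℝ (Fin N))) n / ⟪(ξ : (EuclideanSpace ℝ (Fin N))), x⟫ = c + g ξ
    rw [hdecomp (ξ : (EuclideanSpace ℝ (Fin N))), add_div, mul_div_assoc, div_self hne, mul_one, hg]
  rw [hcongr, integral_add (integrableOn_const (measure_lt_top μs S).ne : IntegrableOn (fun _ => c) S μs) hgint,
    hgzero, add_zero, setIntegral_const, smul_eq_mul, mul_comm, measureReal_def]
end

section
/- Let N ≥ 2, let m ≥ 1, and let p be a harmonic polynomial on ℝ^N, homogeneous of degree m. Then for every n ∈ {1,…,N}, the polynomial x ↦ x_n p(x) − (1/(2λ)) |x|² ∂p/∂x_n(x), where λ = m + (N−2)/2, is a harmonic polynomial homogeneous of degree m+1. -/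
open MvPolynomial Finsupp

section Aux
variable {N : ℕ}

lemma pd_comm (i j : Fin N) (p : MvPolynomial (Fin N) ℝ) :
    pderiv i (pderiv j p) = pderiv j (pderiv i p) := by
  induction p using MvPolynomial.induction_on' with
  | add f g hf hg => simp [map_add, hf, hg]
  | monomial d a =>
    rcases eq_or_ne i j with rfl | h
    · rfl
    · simp only [pderiv_monomial]
      rw [Finsupp.tsub_apply, Finsupp.tsub_apply,
        Finsupp.single_eq_of_ne h, Finsupp.single_eq_of_ne h.symm]
      rw [tsub_right_comm]
      simp only [tsub_zero]
      ring_nf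

lemma euler_monomial (d : Fin N →₀ ℕ) (a : ℝ) :
    ∑ j : Fin N, X j * pderiv j (monomial d a) = (d.degree : ℝ) • monomial d a := by
  have key : ∀ j : Fin N, X j * pderiv j (monomial d a) = (d j : ℝ) • monomial d a := by
    intro j
    rcases Nat.eq_zero_or_pos (d j) with h | h
    · simp [pderiv_monomial, h]
    · rw [pderiv_monomial, X, monomial_mul, one_mul,
        add_tsub_cancel_of_le (Finsupp.single_le_iff.mpr h)]
      rw [smul_monomial]
      rw [smul_eq_mul, mul_comm]
  rw [Finset.sum_congr rfl fun j _ => key j, ← Finset.sum_smul]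
  congr 1
  rw [Finsupp.degree_apply]
  rw [Finset.sum_subset (Finset.subset_univ d.support)]
  · push_cast; rfl
  · intro x _ hx
    simpa using (Finsupp.notMem_support_iff.mp hx)

lemma euler {m : ℕ} {p : MvPolynomial (Fin N) ℝ} (hp : p.IsHomogeneous m) :
    ∑ j : Fin N, X j * pderiv j p = (m : ℝ) • p := by
  conv_lhs => rw [p.as_sum]
  conv_rhs => rw [p.as_sum]
  simp only [map_sum, Finset.mul_sum, Finset.smul_sum]
  rw [Finset.sum_comm]
  refine Finset.sum_congr rfl fun d hd => ?_
  rw [euler_monomial]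
  congr 2
  rw [Finsupp.degree_eq_weight_one]
  exact hp (MvPolynomial.mem_support_iff.mp hd)

lemma pderiv_homog {m : ℕ} {p : MvPolynomial (Fin N) ℝ} (hp : p.IsHomogeneous (m + 1))
    (i : Fin N) : (pderiv i p).IsHomogeneous m := by
  conv_lhs => rw [p.as_sum]
  rw [map_sum]
  refine IsHomogeneous.sum _ _ _ fun d hd => ?_
  rw [pderiv_monomial]
  rcases Nat.eq_zero_or_pos (d i) with h | h
  · simp only [h, Nat.cast_zero, mul_zero, map_zero]
    exact isHomogeneous_zero _ _ _
  · refine isHomogeneous_monomial _ ?_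
    have hdd : d.degree = m + 1 := by
      rw [Finsupp.degree_eq_weight_one]
      exact hp (MvPolynomial.mem_support_iff.mp hd)
    have hle : Finsupp.single i 1 ≤ d := Finsupp.single_le_iff.mpr h
    have h2 : (d - Finsupp.single i 1) + Finsupp.single i 1 = d := tsub_add_cancel_of_le hle
    have hsingle : (Finsupp.single i 1 : Fin N →₀ ℕ).degree = 1 := by
      simp [Finsupp.degree_apply, Finsupp.support_single_ne_zero]
    have h3 : (d - Finsupp.single i 1).degree + (Finsupp.single i 1).degree = m + 1 := by
      simp only [Finsupp.degree_eq_weight_one] at hdd ⊢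
      rw [← map_add, h2, hdd]
    rw [hsingle] at h3
    omega

end Aux

/-- Let `N ≥ 2`, `m ≥ 1`, and let `p` be a harmonic polynomial on `ℝ^N`,
homogeneous of degree `m`. Then for each coordinate `n`, the polynomial
`x ↦ x_n p(x) − (1/(2λ)) |x|² ∂p/∂x_n(x)`, with `λ = m + (N−2)/2`, is a
harmonic polynomial homogeneous of degree `m+1`. -/
theorem harmonic_projection (N : ℕ) (hN : 2 ≤ N) (m : ℕ) (hm : 1 ≤ m)
    (p : MvPolynomial (Fin N) ℝ) (hp : p.IsHomogeneous m)
    (hharm : (∑ j : Fin N, pderiv j (pderiv j p)) = 0) (n : Fin N) :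
    (X n * p - C (1 / (2 * ((m : ℝ) + ((N : ℝ) - 2) / 2))) *
        (∑ j : Fin N, X j ^ 2) * pderiv n p).IsHomogeneous (m + 1) ∧
      (∑ j : Fin N, pderiv j (pderiv j
        (X n * p - C (1 / (2 * ((m : ℝ) + ((N : ℝ) - 2) / 2))) *
          (∑ j : Fin N, X j ^ 2) * pderiv n p))) = 0 := by
  obtain ⟨k, rfl⟩ : ∃ k, m = k + 1 := ⟨m - 1, (Nat.succ_pred_eq_of_pos hm).symm⟩
  set c : ℝ := 1 / (2 * (((k + 1 : ℕ) : ℝ) + ((N : ℝ) - 2) / 2)) with hc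
  set S : MvPolynomial (Fin N) ℝ := ∑ j : Fin N, X j ^ 2 with hS
  set u : MvPolynomial (Fin N) ℝ := pderiv n p with hu
  have hSh : S.IsHomogeneous 2 := by
    refine IsHomogeneous.sum _ _ _ fun j _ => ?_
    simpa using isHomogeneous_X_pow (R := ℝ) j 2
  have huh : u.IsHomogeneous k := pderiv_homog hp n
  constructor
  · refine IsHomogeneous.sub ?_ ?_
    · have := (isHomogeneous_X ℝ n).mul hp
      simpa [add_comm] using this
    · have := (((isHomogeneous_C (Fin N) c).mul hSh).mul huh)
      convert this using 1
      · rfl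
      · omega
  · -- Laplacian computation
    have hdenom : 2 * (((k + 1 : ℕ) : ℝ) + ((N : ℝ) - 2) / 2) = 2 * k + N := by
      push_cast; ring
    -- Laplacian of X n * p
    have hA : ∑ j : Fin N, pderiv j (pderiv j (X n * p)) = 2 * u := by
      have step : ∀ j : Fin N, pderiv j (pderiv j (X n * p)) =
          2 * (pderiv j (X n) * pderiv j p) + X n * pderiv j (pderiv j p) := by
        intro j
        rw [pderiv_mul, map_add, pderiv_mul, pderiv_mul]
        have h0 : pderiv j (pderiv j (X n : MvPolynomial (Fin N) ℝ)) = 0 := by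
          rcases eq_or_ne n j with rfl | h
          · simp
          · simp [pderiv_X_of_ne h]
        rw [h0, zero_mul, zero_add]
        ring
      rw [Finset.sum_congr rfl fun j _ => step j, Finset.sum_add_distrib,
        ← Finset.mul_sum, ← Finset.mul_sum, hharm, mul_zero, add_zero]
      have : ∑ j : Fin N, pderiv j (X n) * pderiv j p = u := by
        rw [Finset.sum_eq_single n]
        · simp [hu]
        · intro j _ hj
          rw [pderiv_X_of_ne (Ne.symm hj), zero_mul]
        · simp
      rw [this]
    -- pderiv j S = 2 * X j
    have hdS : ∀ j : Fin N, pderiv j S = 2 * X j := by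
      intro j
      rw [hS, map_sum, Finset.sum_eq_single j]
      · rw [pderiv_pow, pderiv_X_self]; ring_nf
      · intro i _ hi
        rw [pderiv_pow, pderiv_X_of_ne hi, mul_zero]
      · simp
    -- Delta u = 0
    have hDu : ∑ j : Fin N, pderiv j (pderiv j u) = 0 := by
      have : ∀ j : Fin N, pderiv j (pderiv j u) = pderiv n (pderiv j (pderiv j p)) := by
        intro j
        rw [hu, pd_comm j n p, pd_comm j n (pderiv j p)]
      rw [Finset.sum_congr rfl fun j _ => this j, ← map_sum, hharm, map_zero]
    -- Laplacian of S * u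
    have hB : ∑ j : Fin N, pderiv j (pderiv j (S * u)) =
        C (2 * (N : ℝ) + 4 * (k : ℝ)) * u := by
      have step : ∀ j : Fin N, pderiv j (pderiv j (S * u)) =
          2 * u + 4 * (X j * pderiv j u) + S * pderiv j (pderiv j u) := by
        intro j
        rw [pderiv_mul, map_add, pderiv_mul, pderiv_mul, hdS j, pderiv_mul]
        have h2 : pderiv j (2 : MvPolynomial (Fin N) ℝ) = 0 := by
          rw [show (2 : MvPolynomial (Fin N) ℝ) = C 2 from (map_ofNat C 2).symm, pderiv_C]
        rw [h2, pderiv_X_self]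
        ring
      rw [Finset.sum_congr rfl fun j _ => step j, Finset.sum_add_distrib,
        Finset.sum_add_distrib, ← Finset.mul_sum, ← Finset.mul_sum, ← Finset.mul_sum,
        hDu, mul_zero, add_zero, euler huh, Finset.sum_const, Finset.card_univ,
        Fintype.card_fin]
      rw [← Nat.cast_smul_eq_nsmul ℝ N u, smul_eq_C_mul, smul_eq_C_mul,
        show (2 : MvPolynomial (Fin N) ℝ) = C 2 from (map_ofNat C 2).symm,
        show (4 : MvPolynomial (Fin N) ℝ) = C 4 from (map_ofNat C 4).symm,
        ← mul_assoc, ← mul_assoc, ← C_mul, ← C_mul, ← add_mul, ← C_add]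
    -- assemble
    have hsplit : ∀ j : Fin N,
        pderiv j (pderiv j (X n * p - C c * S * u)) =
          pderiv j (pderiv j (X n * p)) - C c * pderiv j (pderiv j (S * u)) := by
      intro j
      rw [map_sub, map_sub, mul_assoc, pderiv_C_mul, pderiv_C_mul]
    rw [Finset.sum_congr rfl fun j _ => hsplit j, Finset.sum_sub_distrib,
      ← Finset.mul_sum, hA, hB]
    have hne : (2 * (k : ℝ) + N) ≠ 0 := by positivity
    have hcval : c * (2 * (N : ℝ) + 4 * (k : ℝ)) = 2 := by
      rw [hc, hdenom]
      field_simp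
      ring
    rw [← mul_assoc, ← C_mul, hcval, map_ofNat]
    ring
end
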